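/- Uniqueness via the part metric: Let u¹, u² : ℝᴺ → ℝ be bounded continuous functions with positive infimum, with u¹(x) → u⁰ and u²(x) → u⁰ as ‖x‖ → ∞ for a common limit u⁰ > 0. Suppose that whenever (1/α)u¹ ≤ u² ≤ α u¹ pointwise for some α > 1, one has the strict inequalities (1/α)u¹(x) < u²(x) < α u¹(x) for all x ∈ ℝᴺ. Then ρ(u¹,u²) = 0, i.e., u¹ = u², where ρ is the part metric. -/
import Mathlib


def partSet {N : ℕ} (u v : EuclideanSpace ℝ (Fin N) → ℝ) : Set ℝ :=
  {l | ∃ α : ℝ, 1 ≤ α ∧ l = Real.log α ∧ ∀ x, u x / α ≤ v x ∧ v x ≤ α * u x}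

noncomputable def partMetric {N : ℕ} (u v : EuclideanSpace ℝ (Fin N) → ℝ) : ℝ :=
  sInf (partSet u v)

/-- Uniqueness via the part metric: two bounded continuous positive functions with
the same positive limit at spatial infinity, for which nonstrict `α`-comparison
(`α > 1`) always improves to strict comparison, must coincide. -/
theorem uniqueness_via_part_metric {N : ℕ}
    (u₁ u₂ : EuclideanSpace ℝ (Fin N) → ℝ) (u₀ : ℝ) (hu₀ : 0 < u₀)
    (h₁_cont : Continuous u₁) (h₂_cont : Continuous u₂)
    (h₁_bdd : ∃ C : ℝ, ∀ x, u₁ x ≤ C) (h₂_bdd : ∃ C : ℝ, ∀ x, u₂ x ≤ C)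
    (h₁_pos : ∃ m : ℝ, 0 < m ∧ ∀ x, m ≤ u₁ x)
    (h₂_pos : ∃ m : ℝ, 0 < m ∧ ∀ x, m ≤ u₂ x)
    (h₁_lim : ∀ ε > 0, ∃ R : ℝ, ∀ x, R ≤ ‖x‖ → |u₁ x - u₀| < ε)
    (h₂_lim : ∀ ε > 0, ∃ R : ℝ, ∀ x, R ≤ ‖x‖ → |u₂ x - u₀| < ε)
    (hstrict : ∀ α : ℝ, 1 < α →
      (∀ x, u₁ x / α ≤ u₂ x ∧ u₂ x ≤ α * u₁ x) →
      ∀ x, u₁ x / α < u₂ x ∧ u₂ x < α * u₁ x) :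
    partMetric u₁ u₂ = 0 ∧ u₁ = u₂ := by
  obtain ⟨C₁, hC₁⟩ := h₁_bdd
  obtain ⟨C₂, hC₂⟩ := h₂_bdd
  obtain ⟨m₁, hm₁, hm₁le⟩ := h₁_pos
  obtain ⟨m₂, hm₂, hm₂le⟩ := h₂_pos
  have hu₁pos : ∀ x, 0 < u₁ x := fun x => lt_of_lt_of_le hm₁ (hm₁le x)
  have hu₂pos : ∀ x, 0 < u₂ x := fun x => lt_of_lt_of_le hm₂ (hm₂le x)
  have hC₁pos : 0 < C₁ := lt_of_lt_of_le (hu₁pos 0) (hC₁ 0)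
  -- partSet is nonempty
  set α₀ : ℝ := max (max (C₂ / m₁) (C₁ / m₂)) 1 with hα₀def
  have hα₀1 : (1 : ℝ) ≤ α₀ := le_max_right _ _
  have hα₀pos : (0 : ℝ) < α₀ := lt_of_lt_of_le one_pos hα₀1
  have hmem : Real.log α₀ ∈ partSet u₁ u₂ := by
    refine ⟨α₀, hα₀1, rfl, fun x => ⟨?_, ?_⟩⟩
    · have h1 : C₁ / m₂ ≤ α₀ := le_trans (le_max_right _ _) (le_max_left _ _)
      have h2 : C₁ ≤ α₀ * m₂ := by
        rw [div_le_iff₀ hm₂] at h1; linarith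
      rw [div_le_iff₀ hα₀pos]
      nlinarith [hC₁ x, hm₂le x]
    · have h1 : C₂ / m₁ ≤ α₀ := le_trans (le_max_left _ _) (le_max_left _ _)
      have h2 : C₂ ≤ α₀ * m₁ := by
        rw [div_le_iff₀ hm₁] at h1; linarith
      nlinarith [hC₂ x, hm₁le x]
  have hne : (partSet u₁ u₂).Nonempty := ⟨_, hmem⟩
  have hbdd : BddBelow (partSet u₁ u₂) := by
    refine ⟨0, fun l hl => ?_⟩
    obtain ⟨α, hα, rfl, -⟩ := hl
    exact Real.log_nonneg hα
  set ρ : ℝ := sInf (partSet u₁ u₂) with hρdef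
  have hρ0 : 0 ≤ ρ := le_csInf hne (by rintro l ⟨α, hα, rfl, -⟩; exact Real.log_nonneg hα)
  set A : ℝ := Real.exp ρ with hAdef
  have hApos : 0 < A := Real.exp_pos ρ
  have hA1 : 1 ≤ A := by
    rw [hAdef, ← Real.exp_zero]
    exact Real.exp_le_exp.mpr hρ0
  -- the infimum-comparison: u₁ / A ≤ u₂ ≤ A * u₁
  have hcomp : ∀ x, u₁ x / A ≤ u₂ x ∧ u₂ x ≤ A * u₁ x := by
    intro x
    have hget : ∀ b : ℝ, A < b → ∃ α : ℝ, 1 ≤ α ∧ α < b ∧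
        u₁ x / α ≤ u₂ x ∧ u₂ x ≤ α * u₁ x := by
      intro b hb
      have hbpos : 0 < b := lt_trans hApos hb
      have hlt : ρ < Real.log b := by
        have := Real.log_lt_log hApos hb
        rwa [hAdef, Real.log_exp] at this
      obtain ⟨l, hl, hlb⟩ := (csInf_lt_iff hbdd hne).mp (lt_of_le_of_lt (le_refl ρ) hlt)
      obtain ⟨α, hα1, rfl, hαcomp⟩ := hl
      have hαpos : 0 < α := lt_of_lt_of_le one_pos hα1
      have hαb : α < b := by
        rwa [Real.log_lt_log_iff hαpos hbpos] at hlb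
      exact ⟨α, hα1, hαb, hαcomp x⟩
    constructor
    · -- u₁ x / A ≤ u₂ x, i.e. u₁ x ≤ A * u₂ x
      rw [div_le_iff₀ hApos]
      have : u₁ x / u₂ x ≤ A := by
        refine le_of_forall_gt_imp_ge_of_dense fun b hb => ?_
        obtain ⟨α, hα1, hαb, hlo, _⟩ := hget b hb
        have hαpos : 0 < α := lt_of_lt_of_le one_pos hα1
        rw [div_le_iff₀ hαpos] at hlo
        rw [div_le_iff₀ (hu₂pos x)]
        nlinarith [hu₂pos x]
      rw [div_le_iff₀ (hu₂pos x)] at this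
      linarith
    · have : u₂ x / u₁ x ≤ A := by
        refine le_of_forall_gt_imp_ge_of_dense fun b hb => ?_
        obtain ⟨α, hα1, hαb, _, hhi⟩ := hget b hb
        rw [div_le_iff₀ (hu₁pos x)]
        nlinarith [hu₁pos x]
      rw [div_le_iff₀ (hu₁pos x)] at this
      linarith
  -- main claim : ρ = 0
  have hρeq : ρ = 0 := by
    by_contra hρne
    have hρpos : 0 < ρ := lt_of_le_of_ne hρ0 (Ne.symm hρne)
    have hA1' : 1 < A := by
      rw [hAdef, ← Real.exp_zero]
      exact Real.exp_lt_exp.mpr hρpos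
    have hs := hstrict A hA1' hcomp
    -- parameters
    set β₁ : ℝ := (1 + A) / 2 with hβ₁def
    have hβ₁1 : 1 < β₁ := by rw [hβ₁def]; linarith
    have hβ₁A : β₁ < A := by rw [hβ₁def]; linarith
    set δ : ℝ := u₀ * (β₁ - 1) / (β₁ + 1) with hδdef
    have hδpos : 0 < δ := by
      rw [hδdef]
      apply div_pos (by nlinarith) (by linarith)
    have hδu₀ : δ < u₀ := by
      rw [hδdef, div_lt_iff₀ (by linarith : (0:ℝ) < β₁ + 1)]
      nlinarith
    have hkey : u₀ + δ = β₁ * (u₀ - δ) := by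
      rw [hδdef]
      field_simp
      ring
    obtain ⟨R₁, hR₁⟩ := h₁_lim δ hδpos
    obtain ⟨R₂, hR₂⟩ := h₂_lim δ hδpos
    set R : ℝ := max R₁ R₂ with hRdef
    -- compact ball minimum
    set K : Set (EuclideanSpace ℝ (Fin N)) := Metric.closedBall 0 (max R 0) with hKdef
    have hKcomp : IsCompact K := isCompact_closedBall _ _
    have hKne : K.Nonempty := ⟨0, by simp [hKdef, le_max_right]⟩
    obtain ⟨x₁, hx₁K, hx₁min⟩ := hKcomp.exists_isMinOn hKne
      (Continuous.continuousOn ((continuous_const.mul h₁_cont).sub h₂_cont))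
    obtain ⟨x₂, hx₂K, hx₂min⟩ := hKcomp.exists_isMinOn hKne
      (Continuous.continuousOn (h₂_cont.sub (h₁_cont.div_const A)))
    set c : ℝ := min (A * u₁ x₁ - u₂ x₁) (u₂ x₂ - u₁ x₂ / A) with hcdef
    have hcpos : 0 < c := by
      apply lt_min
      · linarith [(hs x₁).2]
      · linarith [(hs x₂).1]
    have hcK : ∀ x ∈ K, c ≤ A * u₁ x - u₂ x ∧ c ≤ u₂ x - u₁ x / A := fun x hx =>
      ⟨le_trans (min_le_left _ _) (isMinOn_iff.mp hx₁min x hx),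
       le_trans (min_le_right _ _) (isMinOn_iff.mp hx₂min x hx)⟩
    -- the improved constant
    set β : ℝ := max β₁ (A - c / C₁) with hβdef
    have hβ1 : 1 < β := lt_of_lt_of_le hβ₁1 (le_max_left _ _)
    have hβA : β < A := by
      apply max_lt hβ₁A
      have : 0 < c / C₁ := div_pos hcpos hC₁pos
      linarith
    have hβ₁β : β₁ ≤ β := le_max_left _ _
    have hβc : (A - β) * C₁ ≤ c := by
      have h1 : A - c / C₁ ≤ β := le_max_right _ _
      have h2 : A - β ≤ c / C₁ := by linarith
      calc (A - β) * C₁ ≤ (c / C₁) * C₁ := by nlinarith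
        _ = c := div_mul_cancel₀ c (ne_of_gt hC₁pos)
    have hβpos : 0 < β := lt_trans one_pos hβ1
    -- comparison with β everywhere
    have hmemβ : Real.log β ∈ partSet u₁ u₂ := by
      refine ⟨β, le_of_lt hβ1, rfl, fun x => ?_⟩
      by_cases hx : R ≤ ‖x‖
      · -- outside the ball
        have h1 := hR₁ x (le_trans (le_max_left _ _) hx)
        have h2 := hR₂ x (le_trans (le_max_right _ _) hx)
        rw [abs_lt] at h1 h2
        constructor
        · rw [div_le_iff₀ hβpos]
          have ha : u₁ x ≤ β₁ * (u₀ - δ) := by rw [← hkey]; linarith [h1.2]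
          have hb : β₁ * (u₀ - δ) ≤ β₁ * u₂ x :=
            mul_le_mul_of_nonneg_left (by linarith [h2.1]) (by linarith)
          have hcx : β₁ * u₂ x ≤ u₂ x * β := by
            rw [mul_comm β₁]
            exact mul_le_mul_of_nonneg_left hβ₁β (le_of_lt (hu₂pos x))
          linarith
        · have ha : u₂ x ≤ β₁ * (u₀ - δ) := by rw [← hkey]; linarith [h2.2]
          have hb : β₁ * (u₀ - δ) ≤ β₁ * u₁ x :=
            mul_le_mul_of_nonneg_left (by linarith [h1.1]) (by linarith)
          have hcx : β₁ * u₁ x ≤ β * u₁ x :=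
            mul_le_mul_of_nonneg_right hβ₁β (le_of_lt (hu₁pos x))
          linarith
      · -- inside the ball
        push_neg at hx
        have hxK : x ∈ K := by
          rw [hKdef, Metric.mem_closedBall, dist_zero_right]
          exact le_trans (le_of_lt hx) (le_max_left _ _)
        obtain ⟨hcu, hcl⟩ := hcK x hxK
        constructor
        · -- u₁ x / β ≤ u₂ x
          rw [div_le_iff₀ hβpos]
          have ht : u₁ x / A ≤ C₁ := le_trans (div_le_self (le_of_lt (hu₁pos x)) hA1) (hC₁ x)
          have ht0 : 0 ≤ u₁ x / A := le_of_lt (div_pos (hu₁pos x) hApos)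
          have hAt : u₁ x / A * A = u₁ x := div_mul_cancel₀ _ (ne_of_gt hApos)
          have hmid : u₁ x / A * A ≤ (u₁ x / A + c) * β := by
            have e1 : u₁ x / A * (A - β) ≤ C₁ * (A - β) :=
              mul_le_mul_of_nonneg_right ht (by linarith)
            have e2 : C₁ * (A - β) ≤ c * β := by
              calc C₁ * (A - β) = (A - β) * C₁ := mul_comm _ _
                _ ≤ c := hβc
                _ ≤ c * β := le_mul_of_one_le_right (le_of_lt hcpos) (le_of_lt hβ1)
            linarith [e1, e2]
          calc u₁ x = u₁ x / A * A := hAt.symm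
            _ ≤ (u₁ x / A + c) * β := hmid
            _ ≤ u₂ x * β := mul_le_mul_of_nonneg_right (by linarith) (le_of_lt hβpos)
        · -- u₂ x ≤ β * u₁ x
          have e1 : (A - β) * u₁ x ≤ (A - β) * C₁ :=
            mul_le_mul_of_nonneg_left (hC₁ x) (by linarith)
          linarith [e1, hβc, hcu]
    have hle : ρ ≤ Real.log β := csInf_le hbdd hmemβ
    have hlt : Real.log β < ρ := by
      have := Real.log_lt_log hβpos hβA
      rwa [hAdef, Real.log_exp] at this
    linarith
  refine ⟨hρeq, ?_⟩
  have hA1'' : A = 1 := by rw [hAdef, hρeq, Real.exp_zero]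
  funext x
  obtain ⟨hlo, hhi⟩ := hcomp x
  rw [hA1''] at hlo hhi
  rw [div_one] at hlo
  rw [one_mul] at hhi
  linarith
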